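/- Let x, y ∈ ℤ, let S be a finite set of functions f_i(z) = a_i·z + b_i with a_i, b_i ∈ ℤ and a_i ≠ 0, let k ∈ ℤ with k ≠ 0, let g(z) = z + k, and let F = S ∪ {g}. If there exists an S-composition G with G(x) ≡ y (mod k) and sgn(G(x) − y) ≠ sgn(k), then x →_F y. -/
import Mathlib


/-- Apply the composition given by the tuple `L = (f₁, …, f_K)` of affine functions
(encoded by coefficient pairs `(a, b)`, i.e. `z ↦ a·z + b`), viewed as `f_K ∘ ⋯ ∘ f₁`. -/
def applyComp (L : List (ℤ × ℤ)) (x : ℤ) : ℤ := L.foldl (fun z p => p.1 * z + p.2) x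

lemma applyComp_append (L M : List (ℤ × ℤ)) (x : ℤ) :
    applyComp (L ++ M) x = applyComp M (applyComp L x) := by
  simp [applyComp, List.foldl_append]

lemma applyComp_replicate (k : ℤ) (n : ℕ) (z : ℤ) :
    applyComp (List.replicate n ((1 : ℤ), k)) z = z + n * k := by
  induction n generalizing z with
  | zero => simp [applyComp]
  | succ n ih =>
    rw [List.replicate_succ]
    show applyComp (List.replicate n ((1:ℤ), k)) (1 * z + k) = z + (n + 1 : ℕ) * k
    rw [ih]
    push_cast
    ring

/-- Case (B): if some `S`-composition `G` has `G(x) ≡ y (mod k)` and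
`sgn(G(x) − y) ≠ sgn(k)`, then some `F`-composition maps `x` to `y`, where
`F = S ∪ {g}` with `g(z) = z + k` (encoded as the pair `(1, k)`). -/
theorem case_opposite_sign (x y : ℤ) (S : Finset (ℤ × ℤ)) (hS : ∀ p ∈ S, p.1 ≠ 0)
    (k : ℤ) (hk : k ≠ 0)
    (hex : ∃ G : List (ℤ × ℤ), (∀ p ∈ G, p ∈ S) ∧ applyComp G x ≡ y [ZMOD k] ∧
      (applyComp G x - y).sign ≠ k.sign) :
    ∃ G : List (ℤ × ℤ), (∀ p ∈ G, p ∈ insert ((1 : ℤ), k) S) ∧ applyComp G x = y := by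
  obtain ⟨G, hG, hmod, hsign⟩ := hex
  have hdvd : k ∣ (y - applyComp G x) := Int.ModEq.dvd (by simpa using hmod)
  obtain ⟨c, hc⟩ := hdvd
  have hc0 : 0 ≤ c := by
    by_contra h
    push_neg at h
    apply hsign
    have : applyComp G x - y = k * (-c) := by linarith [hc]
    rw [this, Int.sign_mul, Int.sign_eq_one_of_pos (by linarith : (0:ℤ) < -c), mul_one]
  refine ⟨G ++ List.replicate c.toNat ((1:ℤ), k), ?_, ?_⟩
  · intro p hp
    rcases List.mem_append.1 hp with h | h
    · exact Finset.mem_insert_of_mem (hG p h)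
    · simp [List.eq_of_mem_replicate h]
  · rw [applyComp_append, applyComp_replicate, Int.toNat_of_nonneg hc0]
    linarith [hc]
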